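/- Let s, l be positive integers and X ∈ M_{s×l}(ℤ) a matrix all of whose rows sum to 0. Suppose D = Q₁·X·P₁⁻¹ is in Smith normal form for some Q₁ ∈ GL_s(ℤ), P₁ ∈ GL_l(ℤ), and A = Q₂·X·P₂⁻¹ is in homogeneous Smith normal form for some Q₂ ∈ GL_s(ℤ) and P₂ ∈ GL_l(ℤ) with P₂·𝟙 = 𝟙. Then A_{i,i+1} = D_{i,i} for every 1 ≤ i ≤ min(s, l−1). In other words, the diagonal directly above the main diagonal of the homogeneous Smith normal form of X is (α_1,…,α_r,0,…,0), where α_1,…,α_r are the invariant factors of X. -/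

import Mathlib

open Matrix

/-- A matrix `A ∈ M_{s×l}(ℤ)` is in Smith normal form: it is diagonal, and there is `r`
such that the first `r` diagonal entries are positive, the remaining ones vanish, and
consecutive diagonal entries divide each other. -/
def IsSNF {s l : ℕ} (A : Matrix (Fin s) (Fin l) ℤ) : Prop :=
  (∀ (i : Fin s) (j : Fin l), (i : ℕ) ≠ (j : ℕ) → A i j = 0) ∧
  ∃ r : ℕ,
    (∀ (i : Fin s) (j : Fin l), (i : ℕ) = (j : ℕ) →
      ((i : ℕ) < r → 0 < A i j) ∧ (r ≤ (i : ℕ) → A i j = 0)) ∧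
    (∀ (i i' : Fin s) (j j' : Fin l), (i : ℕ) = (j : ℕ) → (i' : ℕ) = (j' : ℕ) →
      (i : ℕ) + 1 = (i' : ℕ) → A i j ∣ A i' j')

/-- The matrix obtained from `A` by erasing its first column. -/
def eraseFirstCol {s l : ℕ} (A : Matrix (Fin s) (Fin l) ℤ) :
    Matrix (Fin s) (Fin (l - 1)) ℤ :=
  Matrix.of fun i j => A i ⟨(j : ℕ) + 1, by have := j.isLt; omega⟩

/-- A matrix `A` with `A·𝟙 = 0` is in homogeneous Smith normal form if the matrix obtained
from `A` by erasing its first column is in Smith normal form. -/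
def IsHSNF {s l : ℕ} (A : Matrix (Fin s) (Fin l) ℤ) : Prop :=
  A *ᵥ 1 = 0 ∧ IsSNF (eraseFirstCol A)

section HSNFAux
open Finset


def dd (s l k : ℕ) (M : Matrix (Fin s) (Fin l) ℤ) : ℤ :=
  Finset.gcd Finset.univ
    (fun p : (Fin k → Fin s) × (Fin k → Fin l) => (M.submatrix p.1 p.2).det)

lemma dd_dvd (s l k : ℕ) (M : Matrix (Fin s) (Fin l) ℤ)
    (f : Fin k → Fin s) (g : Fin k → Fin l) :
    dd s l k M ∣ (M.submatrix f g).det :=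
  Finset.gcd_dvd (Finset.mem_univ (f, g))

lemma dvd_dd (s l k : ℕ) (M : Matrix (Fin s) (Fin l) ℤ) (x : ℤ)
    (h : ∀ (f : Fin k → Fin s) (g : Fin k → Fin l), x ∣ (M.submatrix f g).det) :
    x ∣ dd s l k M :=
  Finset.dvd_gcd fun p _ => h p.1 p.2

lemma det_row_expand {k m : ℕ} (c : Fin k → Fin m → ℤ) (v : Fin m → Fin k → ℤ) :
    Matrix.det (Matrix.of fun i j => ∑ t, c i t * v t j)
      = ∑ h : Fin k → Fin m, (∏ i, c i (h i)) * Matrix.det (Matrix.of fun i j => v (h i) j) := by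
  have e : (Matrix.of fun i j => ∑ t, c i t * v t j)
      = fun i => ∑ t : Fin m, c i t • v t := by
    funext i j
    simp [Finset.sum_apply]
  calc Matrix.det (Matrix.of fun i j => ∑ t, c i t * v t j)
      = Matrix.detRowAlternating (fun i => ∑ t : Fin m, c i t • v t) := by
        rw [← e]; rfl
    _ = ∑ h : Fin k → Fin m, Matrix.detRowAlternating (fun i => c i (h i) • v (h i)) :=
        (Matrix.detRowAlternating (R := ℤ) (n := Fin k)).toMultilinearMap.map_sum
          (g := fun i t => c i t • v t)
    _ = ∑ h : Fin k → Fin m, (∏ i, c i (h i)) * Matrix.det (Matrix.of fun i j => v (h i) j) := by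
        refine Finset.sum_congr rfl fun h _ => ?_
        have := MultilinearMap.map_smul_univ
          (Matrix.detRowAlternating (R := ℤ) (n := Fin k)).toMultilinearMap
          (fun i => c i (h i)) (fun i => v (h i))
        rw [show Matrix.det (Matrix.of fun i j => v (h i) j)
          = Matrix.detRowAlternating (fun i => v (h i)) from rfl]
        simpa [smul_eq_mul] using this

lemma dd_dvd_mul_left (s l k : ℕ) (U : Matrix (Fin s) (Fin s) ℤ)
    (M : Matrix (Fin s) (Fin l) ℤ) : dd s l k M ∣ dd s l k (U * M) := by
  refine dvd_dd _ _ _ _ _ fun f g => ?_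
  have e : (U * M).submatrix f g
      = Matrix.of fun i j => ∑ t, U (f i) t * M t (g j) := by
    ext i j
    simp [Matrix.mul_apply]
  rw [e, det_row_expand]
  refine Finset.dvd_sum fun h _ => Dvd.dvd.mul_left ?_ _
  have e2 : (Matrix.of fun i j => M (h i) (g j)) = M.submatrix h g := rfl
  rw [e2]
  exact dd_dvd s l k M h g

lemma dd_transpose_dvd (s l k : ℕ) (M : Matrix (Fin s) (Fin l) ℤ) :
    dd l s k Mᵀ ∣ dd s l k M := by
  refine dvd_dd _ _ _ _ _ fun f g => ?_
  have : (M.submatrix f g) = (Mᵀ.submatrix g f)ᵀ := rfl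
  rw [this, Matrix.det_transpose]
  exact dd_dvd l s k Mᵀ g f

lemma dd_dvd_mul_right (s l k : ℕ) (M : Matrix (Fin s) (Fin l) ℤ)
    (V : Matrix (Fin l) (Fin l) ℤ) : dd s l k M ∣ dd s l k (M * V) := by
  have h1 : dd s l k M ∣ dd l s k Mᵀ := by
    have := dd_transpose_dvd l s k Mᵀ
    rwa [Matrix.transpose_transpose] at this
  have h2 : dd l s k Mᵀ ∣ dd l s k (Vᵀ * Mᵀ) := dd_dvd_mul_left l s k Vᵀ Mᵀ
  have h3 : dd l s k (Vᵀ * Mᵀ) ∣ dd s l k (M * V) := by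
    have := dd_transpose_dvd s l k (M * V)
    rwa [Matrix.transpose_mul] at this
  exact (h1.trans h2).trans h3

lemma dd_nonneg (s l k : ℕ) (M : Matrix (Fin s) (Fin l) ℤ) : 0 ≤ dd s l k M := by
  have h := Finset.normalize_gcd (s := (Finset.univ : Finset ((Fin k → Fin s) × (Fin k → Fin l))))
    (f := fun p => (M.submatrix p.1 p.2).det)
  rw [← Int.abs_eq_normalize] at h
  rw [dd, ← h]
  exact abs_nonneg _

lemma dd_units_eq (s l k : ℕ) (M : Matrix (Fin s) (Fin l) ℤ)
    (U U' : Matrix (Fin s) (Fin s) ℤ) (V V' : Matrix (Fin l) (Fin l) ℤ)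
    (hU : U' * U = 1) (hV : V * V' = 1) :
    dd s l k (U * M * V) = dd s l k M := by
  have hM : U' * (U * M * V) * V' = M := by
    rw [← Matrix.mul_assoc, ← Matrix.mul_assoc, hU, Matrix.one_mul, Matrix.mul_assoc, hV, Matrix.mul_one]
  refine Int.dvd_antisymm (dd_nonneg _ _ _ _) (dd_nonneg _ _ _ _) ?_ ?_
  · calc dd s l k (U * M * V) ∣ dd s l k (U' * (U * M * V)) := dd_dvd_mul_left _ _ _ _ _
      _ ∣ dd s l k (U' * (U * M * V) * V') := dd_dvd_mul_right _ _ _ _ _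
      _ = dd s l k M := by rw [hM]
  · calc dd s l k M ∣ dd s l k (U * M) := dd_dvd_mul_left _ _ _ _ _
      _ ∣ dd s l k (U * M * V) := dd_dvd_mul_right _ _ _ _ _



lemma chain_dvd {δ : ℕ → ℤ} (hchain : ∀ n, δ n ∣ δ (n + 1)) :
    ∀ a b : ℕ, a ≤ b → δ a ∣ δ b := by
  intro a b hab
  induction b, hab using Nat.le_induction with
  | base => exact dvd_rfl
  | succ n hn ih => exact ih.trans (hchain n)

lemma strictMono_le {k : ℕ} {u : Fin k → ℕ} (hu : StrictMono u) (j : Fin k) :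
    (j : ℕ) ≤ u j := by
  have key : ∀ n : ℕ, ∀ j : Fin k, (j : ℕ) = n → n ≤ u j := by
    intro n
    induction n with
    | zero => intro j _; exact Nat.zero_le _
    | succ n ih =>
      intro j hj
      have hn : n < k := by omega
      have h1 := ih ⟨n, hn⟩ rfl
      have h2 : u ⟨n, hn⟩ < u j := hu (by simp [Fin.lt_def]; omega)
      omega
  exact key _ j rfl

lemma prod_range_dvd_prod_of_inj {δ : ℕ → ℤ} (hchain : ∀ n, δ n ∣ δ (n + 1))
    {k : ℕ} (m' : Fin k → ℕ) (hm : Function.Injective m') :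
    (∏ t ∈ Finset.range k, δ t) ∣ ∏ i : Fin k, δ (m' i) := by
  classical
  set S : Finset ℕ := Finset.image m' Finset.univ with hS
  have hcard : S.card = k := by
    rw [hS, Finset.card_image_of_injective _ hm, Finset.card_univ, Fintype.card_fin]
  set e := S.orderIsoOfFin hcard with he
  have hmono : StrictMono fun j : Fin k => ((e j : S) : ℕ) := fun a b hab => e.strictMono hab
  have h1 : ∏ i : Fin k, δ (m' i) = ∏ j : Fin k, δ ((e j : S) : ℕ) := by
    rw [show (∏ i : Fin k, δ (m' i)) = ∏ x ∈ S, δ x by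
      rw [hS, Finset.prod_image (fun x _ y _ h => hm h)]]
    rw [← Finset.prod_coe_sort S δ]
    exact (Equiv.prod_comp e.toEquiv (fun x : S => δ (x : ℕ))).symm
  rw [h1, Finset.prod_range]
  exact Finset.prod_dvd_prod_of_dvd _ _ fun j _ =>
    chain_dvd hchain _ _ (strictMono_le hmono j)

lemma dd_snf {s l : ℕ} (M : Matrix (Fin s) (Fin l) ℤ) (δ : ℕ → ℤ)
    (hδ : ∀ (i : Fin s) (j : Fin l), M i j = if (i : ℕ) = (j : ℕ) then δ (i : ℕ) else 0)
    (hchain : ∀ n, δ n ∣ δ (n + 1)) (hpos : ∀ n, 0 ≤ δ n)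
    {k : ℕ} (hks : k ≤ s) (hkl : k ≤ l) :
    dd s l k M = ∏ t ∈ Finset.range k, δ t := by
  classical
  refine Int.dvd_antisymm (dd_nonneg _ _ _ _) (Finset.prod_nonneg fun t _ => hpos t) ?_ ?_
  · -- dd ∣ ∏ : principal minor
    have e : M.submatrix (Fin.castLE hks) (Fin.castLE hkl)
        = Matrix.diagonal (fun t : Fin k => δ (t : ℕ)) := by
      ext a b
      by_cases hab : a = b
      · subst hab
        simp [hδ, Matrix.diagonal]
      · have : (a : ℕ) ≠ (b : ℕ) := fun h => hab (Fin.ext h)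
        simp [hδ, Matrix.diagonal, hab, this]
    have := dd_dvd s l k M (Fin.castLE hks) (Fin.castLE hkl)
    rw [e, Matrix.det_diagonal] at this
    rwa [Finset.prod_range]
  · -- ∏ ∣ dd
    refine dvd_dd _ _ _ _ _ fun f g => ?_
    by_cases hg : Function.Injective g
    · by_cases hf : Function.Injective f
      · rw [Matrix.det_apply]
        refine Finset.dvd_sum fun σ _ => ?_
        rw [Units.smul_def]
        refine Dvd.dvd.mul_left ?_ _
        by_cases hz : ∃ i, (M.submatrix f g) (σ i) i = 0
        · obtain ⟨i, hi⟩ := hz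
          rw [show (∏ i : Fin k, M.submatrix f g (σ i) i) = 0 from
            Finset.prod_eq_zero (Finset.mem_univ i) hi]
          exact dvd_zero _
        · push_neg at hz
          have hmatch : ∀ i, ((f (σ i)) : ℕ) = ((g i) : ℕ) := by
            intro i
            by_contra hcon
            exact hz i (by rw [Matrix.submatrix_apply, hδ, if_neg hcon])
          have hprod : ∏ i, (M.submatrix f g) (σ i) i = ∏ i : Fin k, δ ((g i : ℕ)) := by
            refine Finset.prod_congr rfl fun i _ => ?_
            rw [Matrix.submatrix_apply, hδ, if_pos (hmatch i), hmatch i]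
          rw [hprod]
          exact prod_range_dvd_prod_of_inj hchain _
            (fun a b hab => hg (Fin.ext hab))
      · -- f not injective : two equal rows
        obtain ⟨a, b, hab, hne⟩ : ∃ a b, f a = f b ∧ a ≠ b := by
          rw [Function.Injective] at hf
          push_neg at hf
          obtain ⟨a, b, h1, h2⟩ := hf
          exact ⟨a, b, h1, h2⟩
        rw [Matrix.det_zero_of_row_eq hne (by
          funext j; simp [Matrix.submatrix_apply, hab])]
        exact dvd_zero _
    · obtain ⟨a, b, hab, hne⟩ : ∃ a b, g a = g b ∧ a ≠ b := by
        rw [Function.Injective] at hg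
        push_neg at hg
        obtain ⟨a, b, h1, h2⟩ := hg
        exact ⟨a, b, h1, h2⟩
      rw [Matrix.det_zero_of_column_eq hne (fun i => by simp [Matrix.submatrix_apply, hab])]
      exact dvd_zero _



/-- The diagonal of `M`, as a sequence `ℕ → ℤ` (zero out of range). -/
def diagSeq {s l : ℕ} (M : Matrix (Fin s) (Fin l) ℤ) : ℕ → ℤ :=
  fun n => if h : n < s ∧ n < l then M ⟨n, h.1⟩ ⟨n, h.2⟩ else 0

/-- The matrix whose `(i,i)` entry is `A i (i+1)`, everything else zero. -/
def shiftDiag {s l : ℕ} (A : Matrix (Fin s) (Fin l) ℤ) : Matrix (Fin s) (Fin l) ℤ :=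
  Matrix.of fun i j =>
    if h : (i : ℕ) = (j : ℕ) ∧ (j : ℕ) + 1 < l then A i ⟨(j : ℕ) + 1, h.2⟩ else 0

lemma snf_diag_eq {s l : ℕ} {M : Matrix (Fin s) (Fin l) ℤ} (h : IsSNF M)
    (i : Fin s) (j : Fin l) :
    M i j = if (i : ℕ) = (j : ℕ) then diagSeq M (i : ℕ) else 0 := by
  by_cases hij : (i : ℕ) = (j : ℕ)
  · rw [if_pos hij, diagSeq, dif_pos ⟨i.isLt, hij ▸ j.isLt⟩]
    congr 1 <;> exact Fin.ext (by simp [hij])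
  · rw [if_neg hij]
    exact h.1 i j hij

lemma snf_chain {s l : ℕ} {M : Matrix (Fin s) (Fin l) ℤ} (h : IsSNF M) (n : ℕ) :
    diagSeq M n ∣ diagSeq M (n + 1) := by
  obtain ⟨hoff, r, hr, hdvd⟩ := h
  by_cases h1 : n + 1 < s ∧ n + 1 < l
  · have h0 : n < s ∧ n < l := ⟨by omega, by omega⟩
    rw [diagSeq, diagSeq, dif_pos h0, dif_pos h1]
    exact hdvd ⟨n, h0.1⟩ ⟨n + 1, h1.1⟩ ⟨n, h0.2⟩ ⟨n + 1, h1.2⟩ rfl rfl rfl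
  · rw [show diagSeq M (n + 1) = 0 from dif_neg h1]
    exact dvd_zero _

lemma snf_shape {s l : ℕ} {M : Matrix (Fin s) (Fin l) ℤ} (h : IsSNF M) :
    ∃ r ≤ min s l, ∀ n, (n < r → 0 < diagSeq M n) ∧ (r ≤ n → diagSeq M n = 0) := by
  obtain ⟨hoff, r, hr, hdvd⟩ := h
  refine ⟨min r (min s l), min_le_right _ _, fun n => ⟨fun hn => ?_, fun hn => ?_⟩⟩
  · have h0 : n < s ∧ n < l := ⟨by omega, by omega⟩
    rw [diagSeq, dif_pos h0]
    exact (hr ⟨n, h0.1⟩ ⟨n, h0.2⟩ rfl).1 (by simp; omega)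
  · by_cases h0 : n < s ∧ n < l
    · rw [diagSeq, dif_pos h0]
      exact (hr ⟨n, h0.1⟩ ⟨n, h0.2⟩ rfl).2 (by simp; omega)
    · exact dif_neg h0

/-- Off-"superdiagonal" entries of an HSNF matrix vanish (in columns ≥ 1). -/
lemma hsnf_off {s l : ℕ} {A : Matrix (Fin s) (Fin l) ℤ} (h : IsSNF (eraseFirstCol A))
    (i : Fin s) (j : Fin l) (hj : 1 ≤ (j : ℕ)) (hij : (i : ℕ) + 1 ≠ (j : ℕ)) :
    A i j = 0 := by
  have hjl : (j : ℕ) - 1 < l - 1 := by have := j.isLt; omega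
  have h0 := h.1 i ⟨(j : ℕ) - 1, hjl⟩ (by simp; omega)
  have hjj : j = ⟨(j : ℕ) - 1 + 1, by have := j.isLt; omega⟩ := Fin.ext (by simp; omega)
  rw [hjj]
  exact h0

/-- `shiftDiag A` is in SNF when `eraseFirstCol A` is. -/
lemma snf_shiftDiag {s l : ℕ} {A : Matrix (Fin s) (Fin l) ℤ}
    (h : IsSNF (eraseFirstCol A)) : IsSNF (shiftDiag A) := by
  obtain ⟨hoff, r, hr, hdvd⟩ := h
  refine ⟨fun i j hij => dif_neg (fun hc => hij hc.1), min r (l - 1), ?_, ?_⟩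
  · intro i j hij
    constructor
    · intro hi
      have hj1 : (j : ℕ) + 1 < l := by omega
      rw [show shiftDiag A i j = A i ⟨(j : ℕ) + 1, hj1⟩ from dif_pos ⟨hij, hj1⟩]
      have hjl : (j : ℕ) < l - 1 := by omega
      exact (hr ⟨(i : ℕ), i.isLt⟩ ⟨(j : ℕ), hjl⟩ hij).1 (by simp; omega)
    · intro hi
      by_cases hj1 : (j : ℕ) + 1 < l
      · rw [show shiftDiag A i j = A i ⟨(j : ℕ) + 1, hj1⟩ from dif_pos ⟨hij, hj1⟩]
        have hjl : (j : ℕ) < l - 1 := by omega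
        exact (hr ⟨(i : ℕ), i.isLt⟩ ⟨(j : ℕ), hjl⟩ hij).2 (by simp; omega)
      · exact dif_neg (fun hc => hj1 hc.2)
  · intro i i' j j' hij hij' hii'
    by_cases hj1 : (j' : ℕ) + 1 < l
    · have hj0 : (j : ℕ) + 1 < l := by omega
      rw [show shiftDiag A i j = A i ⟨(j : ℕ) + 1, hj0⟩ from dif_pos ⟨hij, hj0⟩,
        show shiftDiag A i' j' = A i' ⟨(j' : ℕ) + 1, hj1⟩ from dif_pos ⟨hij', hj1⟩]
      exact hdvd ⟨(i : ℕ), i.isLt⟩ ⟨(i' : ℕ), i'.isLt⟩ ⟨(j : ℕ), by omega⟩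
        ⟨(j' : ℕ), by omega⟩ hij hij' hii'
    · rw [show shiftDiag A i' j' = 0 from dif_neg (fun hc => hj1 hc.2)]
      exact dvd_zero _


def Fmat (l : ℕ) : Matrix (Fin l) (Fin l) ℤ :=
  Matrix.of fun t j =>
    (if (j : ℕ) = (t : ℕ) + 1 then 1 else 0) + (if (j : ℕ) = 0 then -1 else 0)

lemma row_sum {s l : ℕ} {A : Matrix (Fin s) (Fin l) ℤ} (hsum : A *ᵥ 1 = 0) (i : Fin s) :
    ∑ j, A i j = 0 := by
  have := congrFun hsum i
  simpa [Matrix.mulVec, dotProduct] using this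

lemma row_first₁ {s l : ℕ} (hl : 0 < l) {A : Matrix (Fin s) (Fin l) ℤ}
    (hsum : A *ᵥ 1 = 0) (hsnf : IsSNF (eraseFirstCol A)) (i : Fin s)
    (hi : (i : ℕ) + 1 < l) :
    A i ⟨0, hl⟩ = - A i ⟨(i : ℕ) + 1, hi⟩ := by
  have hsplit : A i ⟨0, hl⟩ + ∑ j ∈ Finset.univ.erase ⟨0, hl⟩, A i j = 0 := by
    rw [Finset.add_sum_erase _ _ (Finset.mem_univ _)]
    exact row_sum hsum i
  have he : ∑ j ∈ Finset.univ.erase ⟨0, hl⟩, A i j = A i ⟨(i : ℕ) + 1, hi⟩ := by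
    refine Finset.sum_eq_single_of_mem _ (Finset.mem_erase.2 ⟨by simp [Fin.ext_iff], Finset.mem_univ _⟩) ?_
    intro b hb hbne
    have hb0 : (b : ℕ) ≠ 0 := fun hc => (Finset.mem_erase.1 hb).1 (Fin.ext hc)
    exact hsnf_off hsnf i b (by omega) (fun hc => hbne (Fin.ext hc.symm))
  rw [he] at hsplit
  linarith

lemma row_first₂ {s l : ℕ} (hl : 0 < l) {A : Matrix (Fin s) (Fin l) ℤ}
    (hsum : A *ᵥ 1 = 0) (hsnf : IsSNF (eraseFirstCol A)) (i : Fin s)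
    (hi : ¬ (i : ℕ) + 1 < l) :
    A i ⟨0, hl⟩ = 0 := by
  have hsplit : A i ⟨0, hl⟩ + ∑ j ∈ Finset.univ.erase ⟨0, hl⟩, A i j = 0 := by
    rw [Finset.add_sum_erase _ _ (Finset.mem_univ _)]
    exact row_sum hsum i
  have he : ∑ j ∈ Finset.univ.erase ⟨0, hl⟩, A i j = 0 := by
    refine Finset.sum_eq_zero fun b hb => ?_
    have hb0 : (b : ℕ) ≠ 0 := fun hc => (Finset.mem_erase.1 hb).1 (Fin.ext hc)
    have := b.isLt
    exact hsnf_off hsnf i b (by omega) (by omega)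
  rw [he] at hsplit
  linarith

lemma hsnf_factor {s l : ℕ} (hl : 0 < l) {A : Matrix (Fin s) (Fin l) ℤ}
    (hsum : A *ᵥ 1 = 0) (hsnf : IsSNF (eraseFirstCol A)) :
    A = shiftDiag A * Fmat l := by
  ext i j
  rw [Matrix.mul_apply]
  by_cases hi : (i : ℕ) + 1 < l
  · have hil : (i : ℕ) < l := by omega
    rw [Finset.sum_eq_single (⟨(i : ℕ), hil⟩ : Fin l)]
    · rw [show shiftDiag A i ⟨(i : ℕ), hil⟩ = A i ⟨(i : ℕ) + 1, hi⟩ from dif_pos ⟨rfl, hi⟩]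
      show A i j = A i ⟨(i : ℕ) + 1, hi⟩ *
        ((if (j : ℕ) = (i : ℕ) + 1 then 1 else 0) + (if (j : ℕ) = 0 then -1 else 0))
      by_cases hj1 : (j : ℕ) = (i : ℕ) + 1
      · rw [if_pos hj1, if_neg (by omega), show j = ⟨(i : ℕ) + 1, hi⟩ from Fin.ext hj1]
        ring
      · by_cases hj0 : (j : ℕ) = 0
        · rw [if_neg hj1, if_pos hj0, show j = ⟨0, hl⟩ from Fin.ext hj0,
            row_first₁ hl hsum hsnf i hi]
          ring
        · rw [if_neg hj1, if_neg hj0, hsnf_off hsnf i j (by omega) (by omega)]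
          ring
    · intro b _ hb
      rw [show shiftDiag A i b = 0 from dif_neg (fun hc => hb (Fin.ext hc.1.symm)), zero_mul]
    · intro hmem
      exact absurd (Finset.mem_univ _) hmem
  · rw [Finset.sum_eq_zero (fun t _ => by
      rw [show shiftDiag A i t = 0 from dif_neg (fun hc : (i : ℕ) = (t : ℕ) ∧ (t : ℕ) + 1 < l => absurd (hc.1 ▸ hc.2) hi), zero_mul])]
    by_cases hj0 : (j : ℕ) = 0
    · rw [show j = ⟨0, hl⟩ from Fin.ext hj0]
      exact row_first₂ hl hsum hsnf i hi
    · have := j.isLt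
      exact hsnf_off hsnf i j (by omega) (by omega)




lemma seq_eq {δ₁ δ₂ : ℕ → ℤ} {m r₁ r₂ : ℕ} (hr₁ : r₁ ≤ m) (hr₂ : r₂ ≤ m)
    (h₁ : ∀ n, (n < r₁ → 0 < δ₁ n) ∧ (r₁ ≤ n → δ₁ n = 0))
    (h₂ : ∀ n, (n < r₂ → 0 < δ₂ n) ∧ (r₂ ≤ n → δ₂ n = 0))
    (hP : ∀ k, k ≤ m → (∏ t ∈ Finset.range k, δ₁ t) = ∏ t ∈ Finset.range k, δ₂ t) :
    ∀ n, δ₁ n = δ₂ n := by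
  have aux : ∀ (r r' : ℕ) (f g : ℕ → ℤ), r' ≤ m →
      (∀ n, (n < r → 0 < f n) ∧ (r ≤ n → f n = 0)) →
      (∀ n, n < r' → 0 < g n) →
      (∀ k, k ≤ m → (∏ t ∈ Finset.range k, f t) = ∏ t ∈ Finset.range k, g t) →
      ¬ r < r' := by
    intro r r' f g hr'm hf hg hPk hlt
    have h0 : ∏ t ∈ Finset.range (r + 1), f t = 0 :=
      Finset.prod_eq_zero (Finset.mem_range.2 (Nat.lt_succ_self r)) ((hf r).2 le_rfl)
    have hgt : 0 < ∏ t ∈ Finset.range (r + 1), g t :=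
      Finset.prod_pos fun t ht => hg t (lt_of_lt_of_le (Finset.mem_range.1 ht) hlt)
    rw [hPk (r + 1) (by omega)] at h0
    omega
  have hrr : r₁ = r₂ := by
    rcases lt_trichotomy r₁ r₂ with h | h | h
    · exact absurd h (aux r₁ r₂ δ₁ δ₂ hr₂ h₁ (fun n hn => (h₂ n).1 hn) hP)
    · exact h
    · exact absurd h (aux r₂ r₁ δ₂ δ₁ hr₁ h₂ (fun n hn => (h₁ n).1 hn)
        (fun k hk => (hP k hk).symm))
  intro n
  by_cases hn : r₁ ≤ n
  · rw [(h₁ n).2 hn, (h₂ n).2 (hrr ▸ hn)]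
  · push_neg at hn
    have hc : 0 < ∏ t ∈ Finset.range n, δ₁ t :=
      Finset.prod_pos fun t ht => (h₁ t).1 (lt_trans (Finset.mem_range.1 ht) hn)
    have e1 := hP n (by omega)
    have e2 := hP (n + 1) (by omega)
    rw [Finset.prod_range_succ, Finset.prod_range_succ, ← e1] at e2
    exact mul_left_cancel₀ (ne_of_gt hc) e2


lemma dd_dvd_shiftDiag {s l : ℕ} (k : ℕ) {A : Matrix (Fin s) (Fin l) ℤ}
    (hsnf : IsSNF (eraseFirstCol A)) :
    dd s l k A ∣ dd s l k (shiftDiag A) := by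
  refine dvd_dd _ _ _ _ _ fun f g => ?_
  by_cases hg : ∀ a, (g a : ℕ) + 1 < l
  · have e : (shiftDiag A).submatrix f g
        = A.submatrix f (fun a => ⟨(g a : ℕ) + 1, hg a⟩) := by
      ext a b
      simp only [Matrix.submatrix_apply]
      by_cases hd : ((f a) : ℕ) = ((g b) : ℕ)
      · exact dif_pos ⟨hd, hg b⟩
      · rw [show shiftDiag A (f a) (g b) = 0 from
          dif_neg (fun hc : ((f a) : ℕ) = ((g b) : ℕ) ∧ ((g b) : ℕ) + 1 < l => hd hc.1)]
        exact (hsnf_off hsnf (f a) _ (by simp) (by simp; omega)).symm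
    rw [e]
    exact dd_dvd _ _ _ _ _ _
  · push_neg at hg
    obtain ⟨a, ha⟩ := hg
    rw [Matrix.det_eq_zero_of_column_eq_zero a (fun i =>
      dif_neg (fun hc : ((f i) : ℕ) = ((g a) : ℕ) ∧ ((g a) : ℕ) + 1 < l =>
        absurd hc.2 (not_lt.2 ha)))]
    exact dvd_zero _

end HSNFAux

/-- The diagonal directly above the main diagonal of the homogeneous Smith normal form of a
homogeneous matrix `X` consists of the invariant factors of `X` (the diagonal of its Smith
normal form), followed by zeros. -/
theorem hsnf_superdiagonal_eq_invariant_factors (s l : ℕ) (hs : 0 < s) (hl : 0 < l)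
    (X : Matrix (Fin s) (Fin l) ℤ) (hX : X *ᵥ 1 = 0)
    (Q₁ : Matrix.GeneralLinearGroup (Fin s) ℤ) (P₁ : Matrix.GeneralLinearGroup (Fin l) ℤ)
    (Q₂ : Matrix.GeneralLinearGroup (Fin s) ℤ) (P₂ : Matrix.GeneralLinearGroup (Fin l) ℤ)
    (D A : Matrix (Fin s) (Fin l) ℤ)
    (hD : D = (Q₁ : Matrix (Fin s) (Fin s) ℤ) * X *
      ((P₁⁻¹ : Matrix.GeneralLinearGroup (Fin l) ℤ) : Matrix (Fin l) (Fin l) ℤ))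
    (hDsnf : IsSNF D)
    (hP₂ : (P₂ : Matrix (Fin l) (Fin l) ℤ) *ᵥ 1 = 1)
    (hA : A = (Q₂ : Matrix (Fin s) (Fin s) ℤ) * X *
      ((P₂⁻¹ : Matrix.GeneralLinearGroup (Fin l) ℤ) : Matrix (Fin l) (Fin l) ℤ))
    (hAhsnf : IsHSNF A) :
    ∀ (i : ℕ) (his : i < s) (hil : i < l - 1),
      A ⟨i, his⟩ ⟨i + 1, by omega⟩ = D ⟨i, his⟩ ⟨i, by omega⟩ := by
  classical
  obtain ⟨hAsum, hAsnf⟩ := hAhsnf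
  have hDA_snf : IsSNF (shiftDiag A) := snf_shiftDiag hAsnf
  obtain ⟨rD, hrD, hshD⟩ := snf_shape hDsnf
  obtain ⟨rA, hrA, hshA⟩ := snf_shape hDA_snf
  have hposD : ∀ n, 0 ≤ diagSeq D n := by
    intro n
    rcases lt_or_ge n rD with h | h
    · exact le_of_lt ((hshD n).1 h)
    · rw [(hshD n).2 h]
  have hposA : ∀ n, 0 ≤ diagSeq (shiftDiag A) n := by
    intro n
    rcases lt_or_ge n rA with h | h
    · exact le_of_lt ((hshA n).1 h)
    · rw [(hshA n).2 h]
  have hXD : ∀ k, dd s l k D = dd s l k X := by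
    intro k
    rw [hD]
    exact dd_units_eq s l k X _ _ _ _ (Units.inv_mul Q₁) (Units.inv_mul P₁)
  have hXA : ∀ k, dd s l k A = dd s l k X := by
    intro k
    rw [hA]
    exact dd_units_eq s l k X _ _ _ _ (Units.inv_mul Q₂) (Units.inv_mul P₂)
  have hAshift : ∀ k, dd s l k A = dd s l k (shiftDiag A) := by
    intro k
    refine Int.dvd_antisymm (dd_nonneg _ _ _ _) (dd_nonneg _ _ _ _)
      (dd_dvd_shiftDiag k hAsnf) ?_
    have h2 := dd_dvd_mul_right s l k (shiftDiag A) (Fmat l)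
    rwa [← hsnf_factor hl hAsum hAsnf] at h2
  have hProdD : ∀ k, k ≤ s → k ≤ l → dd s l k D = ∏ t ∈ Finset.range k, diagSeq D t :=
    fun k h1 h2 => dd_snf D (diagSeq D) (snf_diag_eq hDsnf) (snf_chain hDsnf) hposD h1 h2
  have hProdA : ∀ k, k ≤ s → k ≤ l →
      dd s l k (shiftDiag A) = ∏ t ∈ Finset.range k, diagSeq (shiftDiag A) t :=
    fun k h1 h2 => dd_snf _ _ (snf_diag_eq hDA_snf) (snf_chain hDA_snf) hposA h1 h2
  have hseq : ∀ n, diagSeq D n = diagSeq (shiftDiag A) n := by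
    refine seq_eq (m := min s l) hrD hrA hshD hshA fun k hk => ?_
    rw [← hProdD k (by omega) (by omega), ← hProdA k (by omega) (by omega),
      hXD k, ← hXA k, hAshift k]
  intro i his hil
  have hi1 : i < s ∧ i < l := ⟨his, by omega⟩
  have h1 : diagSeq (shiftDiag A) i = A ⟨i, his⟩ ⟨i + 1, by omega⟩ := by
    rw [show diagSeq (shiftDiag A) i = shiftDiag A ⟨i, hi1.1⟩ ⟨i, hi1.2⟩ from dif_pos hi1]
    exact dif_pos ⟨rfl, by simp; omega⟩
  have h2 : diagSeq D i = D ⟨i, his⟩ ⟨i, by omega⟩ := dif_pos hi1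
  rw [← h1, ← h2, hseq i]
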